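/- Let f(x) = Σ_{n=1}^N fₙ sin(nx) and let r = r₀ + r₁ where r₀ : [0,T] → ℝ is continuous and r₁ : [0,T]×ℝ → ℝ is continuous, 2π-periodic in τ with zero mean in τ. Define u_ω(x,t) = Σₙ fₙ sin(nx)∫₀^t (sin(n(t−s))/n) r(s,ωs) ds and u₀(x,t) = Σₙ fₙ sin(nx)∫₀^t (sin(n(t−s))/n) r₀(s) ds. Then sup_{(x,t)∈[0,π]×[0,T]} |u_ω(x,t) − u₀(x,t)| → 0 as ω → ∞. -/

import Mathlib

open Real Set intervalIntegral

private lemma pbound_le (h : ℝ → ℝ) (M : ℝ) (hc : Continuous h)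
    (hp : Function.Periodic h (2 * π)) (h0 : (∫ τ in (0:ℝ)..(2 * π), h τ) = 0)
    (hM : ∀ τ, |h τ| ≤ M) {a b : ℝ} (hab : a ≤ b) :
    |∫ τ in a..b, h τ| ≤ 2 * π * M := by
  have h2π : (0:ℝ) < 2 * π := by positivity
  have hint : ∀ t₁ t₂ : ℝ, IntervalIntegrable h MeasureTheory.volume t₁ t₂ :=
    fun _ _ => hc.intervalIntegrable _ _
  set n : ℤ := ⌊(b - a) / (2 * π)⌋ with hn
  have hfl := Int.floor_le ((b - a) / (2 * π))
  have hfl' := Int.lt_floor_add_one ((b - a) / (2 * π))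
  have h1 : (n : ℝ) * (2 * π) ≤ b - a := by
    rw [← le_div_iff₀ h2π]; exact hfl
  have h2 : b - a < ((n : ℝ) + 1) * (2 * π) := by
    rw [← div_lt_iff₀ h2π]; exact hfl'
  have hsplit : (∫ τ in a..(a + n • (2 * π)), h τ) + (∫ τ in (a + n • (2 * π))..b, h τ)
      = ∫ τ in a..b, h τ := integral_add_adjacent_intervals (hint _ _) (hint _ _)
  have hz : (∫ τ in a..(a + n • (2 * π)), h τ) = 0 := by
    rw [hp.intervalIntegral_add_zsmul_eq n a hint]
    rw [hp.intervalIntegral_add_eq a 0, zero_add, h0, smul_zero]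
  rw [← hsplit, hz, zero_add]
  have key : |∫ τ in (a + n • (2 * π))..b, h τ| ≤ M * |b - (a + n • (2 * π))| := by
    have := intervalIntegral.norm_integral_le_of_norm_le_const
      (C := M) (f := h) (a := a + n • (2 * π)) (b := b)
      (fun x _ => by simpa [Real.norm_eq_abs] using hM x)
    simpa [Real.norm_eq_abs] using this
  refine key.trans ?_
  have hble : |b - (a + n • (2 * π))| ≤ 2 * π := by
    rw [abs_le]
    constructor
    · simp only [zsmul_eq_mul]; nlinarith
    · simp only [zsmul_eq_mul]; nlinarith
  have hM0 : 0 ≤ M := (abs_nonneg _).trans (hM 0)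
  calc M * |b - (a + n • (2 * π))| ≤ M * (2 * π) := by
        exact mul_le_mul_of_nonneg_left hble hM0
    _ = 2 * π * M := by ring

private lemma pbound (h : ℝ → ℝ) (M : ℝ) (hc : Continuous h)
    (hp : Function.Periodic h (2 * π)) (h0 : (∫ τ in (0:ℝ)..(2 * π), h τ) = 0)
    (hM : ∀ τ, |h τ| ≤ M) (a b : ℝ) :
    |∫ τ in a..b, h τ| ≤ 2 * π * M := by
  rcases le_total a b with hab | hab
  · exact pbound_le h M hc hp h0 hM hab
  · rw [intervalIntegral.integral_symm, abs_neg]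
    exact pbound_le h M hc hp h0 hM hab

private lemma reduce (g : ℝ → ℝ → ℝ) (hper : ∀ t τ, g t (τ + 2 * π) = g t τ) (τ : ℝ) :
    ∃ τ₀ ∈ Icc (0:ℝ) (2 * π), ∀ s, g s τ = g s τ₀ := by
  have h2π : (0:ℝ) < 2 * π := by positivity
  refine ⟨τ - ⌊τ / (2 * π)⌋ * (2 * π), ?_, fun s => ?_⟩
  · have h1 : (⌊τ / (2 * π)⌋ : ℝ) * (2 * π) ≤ τ := by
      rw [← le_div_iff₀ h2π]; exact Int.floor_le _
    have h2 : τ < ((⌊τ / (2 * π)⌋ : ℝ) + 1) * (2 * π) := by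
      rw [← div_lt_iff₀ h2π]; exact Int.lt_floor_add_one _
    constructor <;> nlinarith
  · have hp : Function.Periodic (g s) (2 * π) := fun x => hper s x
    exact (hp.sub_int_mul_eq _).symm


private lemma key (T : ℝ) (hT : 0 < T) (g : ℝ → ℝ → ℝ) (hg : Continuous (Function.uncurry g))
    (hper : ∀ t τ, g t (τ + 2 * π) = g t τ)
    (hmean : ∀ t, (∫ τ in (0:ℝ)..(2 * π), g t τ) = 0) :
    ∀ ε > 0, ∃ ω₀ : ℝ, 1 ≤ ω₀ ∧ ∀ ω ≥ ω₀, ∀ t ∈ Icc (0:ℝ) T,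
      |∫ s in (0:ℝ)..t, g s (ω * s)| ≤ ε := by
  intro ε hε
  have h2π : (0:ℝ) < 2 * π := by positivity
  -- continuity facts
  have hgs : ∀ s : ℝ, Continuous (g s) := fun s =>
    hg.comp (Continuous.prodMk_right s)
  have hgω : ∀ ω : ℝ, Continuous (fun s => g s (ω * s)) := fun ω =>
    hg.comp (continuous_id.prodMk (continuous_const.mul continuous_id))
  have hp : ∀ s : ℝ, Function.Periodic (g s) (2 * π) := fun s x => hper s x
  -- bound M
  set K : Set (ℝ × ℝ) := Icc (0:ℝ) T ×ˢ Icc (0:ℝ) (2 * π) with hK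
  have hKc : IsCompact K := isCompact_Icc.prod isCompact_Icc
  obtain ⟨M, hM⟩ := hKc.exists_bound_of_continuousOn hg.continuousOn
  have hMall : ∀ s ∈ Icc (0:ℝ) T, ∀ τ : ℝ, |g s τ| ≤ M := by
    intro s hs τ
    obtain ⟨τ₀, hτ₀, he⟩ := reduce g hper τ
    rw [he s]
    simpa [Real.norm_eq_abs] using hM (s, τ₀) (Set.mk_mem_prod hs hτ₀)
  have hM0 : 0 ≤ M := by
    have := hMall 0 ⟨le_rfl, hT.le⟩ 0
    exact (abs_nonneg _).trans this
  -- uniform continuity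
  have hε' : (0:ℝ) < ε / (2 * T) := by positivity
  have huc := (hKc.uniformContinuousOn_of_continuous hg.continuousOn)
  rw [Metric.uniformContinuousOn_iff] at huc
  obtain ⟨δ, hδ, Hδ⟩ := huc (ε / (2 * T)) hε'
  have hUC : ∀ s ∈ Icc (0:ℝ) T, ∀ a ∈ Icc (0:ℝ) T, |s - a| < δ →
      ∀ τ : ℝ, |g s τ - g a τ| ≤ ε / (2 * T) := by
    intro s hs a ha hsa τ
    obtain ⟨τ₀, hτ₀, he⟩ := reduce g hper τ
    rw [he s, he a]
    have := Hδ (s, τ₀) (Set.mk_mem_prod hs hτ₀) (a, τ₀) (Set.mk_mem_prod ha hτ₀)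
      (by simpa [Prod.dist_eq, Real.dist_eq] using hsa)
    simp only [Function.uncurry, Real.dist_eq] at this
    exact this.le
  -- partition size
  obtain ⟨m, hm⟩ := exists_nat_gt (T / δ)
  have hm0 : 0 < (m:ℝ) := lt_of_le_of_lt (by positivity) hm
  have hTm : T / m < δ := by
    rw [div_lt_iff₀ hm0]
    rw [div_lt_iff₀ hδ] at hm
    linarith [hm]
  have hTm0 : 0 ≤ T / (m:ℝ) := by positivity
  -- choose ω₀
  set C : ℝ := 2 * π * M with hC
  have hC0 : 0 ≤ C := by positivity
  refine ⟨max 1 (2 * m * C / ε), le_max_left _ _, ?_⟩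
  intro ω hω t ht
  have hω1 : (1:ℝ) ≤ ω := le_trans (le_max_left _ _) hω
  have hω0 : (0:ℝ) < ω := lt_of_lt_of_le one_pos hω1
  have hωC : (m:ℝ) * (C / ω) ≤ ε / 2 := by
    have h1 : 2 * m * C / ε ≤ ω := le_trans (le_max_right _ _) hω
    rw [div_le_iff₀ hε] at h1
    rw [mul_div_assoc'] at *
    rw [div_le_div_iff₀ hω0 two_pos]
    nlinarith
  -- one-step estimate
  have step : ∀ a t : ℝ, a ∈ Icc (0:ℝ) T → t ∈ Icc (0:ℝ) T → a ≤ t → t - a < δ →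
      |∫ s in a..t, g s (ω * s)| ≤ ε / (2 * T) * (t - a) + C / ω := by
    intro a t ha ht hat hlt
    have int1 : IntervalIntegrable (fun s => g s (ω * s) - g a (ω * s))
        MeasureTheory.volume a t := ((hgω ω).sub ((hgs a).comp (continuous_const.mul continuous_id))).intervalIntegrable _ _
    have int2 : IntervalIntegrable (fun s => g a (ω * s)) MeasureTheory.volume a t :=
      ((hgs a).comp (continuous_const.mul continuous_id)).intervalIntegrable _ _
    have hsplit : (∫ s in a..t, g s (ω * s))
        = (∫ s in a..t, (g s (ω * s) - g a (ω * s))) + ∫ s in a..t, g a (ω * s) := by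
      rw [intervalIntegral.integral_sub ((hgω ω).intervalIntegrable _ _) int2]; ring
    rw [hsplit]
    have b1 : |∫ s in a..t, (g s (ω * s) - g a (ω * s))| ≤ ε / (2 * T) * (t - a) := by
      have := intervalIntegral.norm_integral_le_of_norm_le_const
        (C := ε / (2 * T)) (a := a) (b := t)
        (f := fun s => g s (ω * s) - g a (ω * s)) ?_
      · rw [Real.norm_eq_abs] at this
        refine this.trans ?_
        rw [abs_of_nonneg (by linarith)]
      · intro x hx
        rw [Set.uIoc_of_le hat] at hx
        have hx1 : x ∈ Icc (0:ℝ) T := ⟨le_trans ha.1 hx.1.le, le_trans hx.2 ht.2⟩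
        have hxa : |x - a| < δ := by
          rw [abs_of_nonneg (by linarith [hx.1.le])]
          linarith [hx.2]
        simpa [Real.norm_eq_abs] using hUC x hx1 a ha hxa (ω * x)
    have b2 : |∫ s in a..t, g a (ω * s)| ≤ C / ω := by
      rw [intervalIntegral.integral_comp_mul_left (g a) (ne_of_gt hω0)]
      rw [smul_eq_mul, abs_mul, abs_inv, abs_of_pos hω0]
      rw [div_eq_inv_mul]
      refine mul_le_mul_of_nonneg_left ?_ (by positivity)
      exact pbound (g a) M (hgs a) (hp a) (hmean a) (hMall a ha) _ _
    calc |(∫ s in a..t, (g s (ω * s) - g a (ω * s))) + ∫ s in a..t, g a (ω * s)|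
        ≤ |∫ s in a..t, (g s (ω * s) - g a (ω * s))| + |∫ s in a..t, g a (ω * s)| :=
          abs_add_le _ _
      _ ≤ ε / (2 * T) * (t - a) + C / ω := add_le_add b1 b2
  -- induction over partition
  have main : ∀ i : ℕ, ∀ t ∈ Icc (0:ℝ) T, t ≤ i * (T / m) →
      |∫ s in (0:ℝ)..t, g s (ω * s)| ≤ ε / (2 * T) * t + i * (C / ω) := by
    intro i
    induction i with
    | zero =>
      intro t ht hti
      simp only [Nat.cast_zero, zero_mul] at hti ⊢
      have : t = 0 := le_antisymm hti ht.1
      subst this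
      simp
    | succ i ih =>
      intro t ht hti
      by_cases hcase : t ≤ i * (T / m)
      · refine (ih t ht hcase).trans ?_
        have : (i:ℝ) * (C / ω) ≤ (i + 1 : ℕ) * (C / ω) := by
          push_cast
          have : (0:ℝ) ≤ C / ω := by positivity
          nlinarith
        linarith
      · push_neg at hcase
        set a : ℝ := i * (T / m) with haa
        have ha : a ∈ Icc (0:ℝ) T := ⟨by positivity, le_trans hcase.le ht.2⟩
        have hat : a ≤ t := hcase.le
        have htaδ : t - a < δ := by
          have : t - a ≤ T / m := by
            push_cast at hti
            rw [haa]
            nlinarith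
          linarith
        have hsplit : (∫ s in (0:ℝ)..a, g s (ω * s)) + (∫ s in a..t, g s (ω * s))
            = ∫ s in (0:ℝ)..t, g s (ω * s) :=
          integral_add_adjacent_intervals ((hgω ω).intervalIntegrable _ _)
            ((hgω ω).intervalIntegrable _ _)
        rw [← hsplit]
        have h1 := ih a ha le_rfl
        have h2 := step a t ha ht hat htaδ
        calc |(∫ s in (0:ℝ)..a, g s (ω * s)) + ∫ s in a..t, g s (ω * s)|
            ≤ |∫ s in (0:ℝ)..a, g s (ω * s)| + |∫ s in a..t, g s (ω * s)| := abs_add_le _ _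
          _ ≤ (ε / (2 * T) * a + i * (C / ω)) + (ε / (2 * T) * (t - a) + C / ω) :=
              add_le_add h1 h2
          _ = ε / (2 * T) * t + (i + 1 : ℕ) * (C / ω) := by push_cast; ring
  -- conclude
  have hTeq : T ≤ (m:ℝ) * (T / m) := by
    rw [mul_div_assoc', mul_comm, mul_div_assoc, div_self (ne_of_gt hm0), mul_one]
  have := main m t ht (le_trans ht.2 hTeq)
  refine this.trans ?_
  have e1 : ε / (2 * T) * t ≤ ε / 2 := by
    have : ε / (2 * T) * t ≤ ε / (2 * T) * T :=
      mul_le_mul_of_nonneg_left ht.2 hε'.le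
    calc ε / (2 * T) * t ≤ ε / (2 * T) * T := this
      _ = ε / 2 := by field_simp
  linarith

private lemma key2 (T : ℝ) (hT : 0 < T)
    (r₁ : ℝ → ℝ → ℝ) (hr₁ : Continuous (Function.uncurry r₁))
    (hper : ∀ t τ, r₁ t (τ + 2 * π) = r₁ t τ)
    (hmean : ∀ t, (∫ τ in (0:ℝ)..(2 * π), r₁ t τ) = 0)
    (q : ℝ → ℝ) (hq : Continuous q) :
    ∀ ε > 0, ∃ ω₀ : ℝ, 1 ≤ ω₀ ∧ ∀ ω ≥ ω₀, ∀ t ∈ Icc (0:ℝ) T,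
      |∫ s in (0:ℝ)..t, q s * r₁ s (ω * s)| ≤ ε := by
  intro ε hε
  have hc : Continuous (Function.uncurry (fun s τ => q s * r₁ s τ)) :=
    (hq.comp continuous_fst).mul hr₁
  have hp : ∀ t τ, (fun s τ => q s * r₁ s τ) t (τ + 2 * π)
      = (fun s τ => q s * r₁ s τ) t τ := by
    intro t τ; simp only []; rw [hper]
  have hm : ∀ t, (∫ τ in (0:ℝ)..(2 * π), (fun s τ => q s * r₁ s τ) t τ) = 0 := by
    intro t; simp only []
    rw [intervalIntegral.integral_const_mul, hmean, mul_zero]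
  exact key T hT (fun s τ => q s * r₁ s τ) hc hp hm ε hε

theorem stmt13 (T : ℝ) (hT : 0 < T) (N : ℕ) (hN : 1 ≤ N)
    (f : Fin N → ℝ) (r₀ : ℝ → ℝ) (hr₀ : ContinuousOn r₀ (Icc 0 T))
    (r₁ : ℝ → ℝ → ℝ) (hr₁ : Continuous (Function.uncurry r₁))
    (hper : ∀ t τ, r₁ t (τ + 2 * π) = r₁ t τ)
    (hmean : ∀ t, ∫ τ in (0:ℝ)..(2 * π), r₁ t τ = 0) :
    ∀ ε > 0, ∃ ω₀ : ℝ, ∀ ω ≥ ω₀, ∀ x ∈ Icc (0:ℝ) π, ∀ t ∈ Icc (0:ℝ) T,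
      |(∑ n : Fin N, f n * Real.sin ((n.val + 1) * x) *
          ∫ s in (0:ℝ)..t, Real.sin ((n.val + 1) * (t - s)) / (n.val + 1) *
            (r₀ s + r₁ s (ω * s)))
        - ∑ n : Fin N, f n * Real.sin ((n.val + 1) * x) *
          ∫ s in (0:ℝ)..t, Real.sin ((n.val + 1) * (t - s)) / (n.val + 1) * r₀ s| < ε := by
  intro ε hε
  haveI : Nonempty (Fin N) := ⟨⟨0, hN⟩⟩
  set S : ℝ := ∑ n : Fin N, |f n| with hS
  have hS0 : 0 ≤ S := Finset.sum_nonneg fun n _ => abs_nonneg _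
  set e : ℝ := ε / (4 * (S + 1)) with he
  have he0 : 0 < e := by positivity
  have hqc : ∀ n : Fin N, Continuous (fun s : ℝ => Real.cos (((n.val:ℝ) + 1) * s) / ((n.val:ℝ) + 1)) :=
    fun n => (Real.continuous_cos.comp (continuous_const.mul continuous_id)).div_const _
  have hqs : ∀ n : Fin N, Continuous (fun s : ℝ => Real.sin (((n.val:ℝ) + 1) * s) / ((n.val:ℝ) + 1)) :=
    fun n => (Real.continuous_sin.comp (continuous_const.mul continuous_id)).div_const _
  choose W1 hW1a hW1b using fun n : Fin N =>
    key2 T hT r₁ hr₁ hper hmean _ (hqc n) e he0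
  choose W2 hW2a hW2b using fun n : Fin N =>
    key2 T hT r₁ hr₁ hper hmean _ (hqs n) e he0
  refine ⟨Finset.univ.sup' Finset.univ_nonempty (fun n => max (W1 n) (W2 n)), ?_⟩
  intro ω hω x hx t ht
  have hsup : ∀ n : Fin N, max (W1 n) (W2 n) ≤ ω := fun n =>
    le_trans (Finset.le_sup' (fun n => max (W1 n) (W2 n)) (Finset.mem_univ n)) hω
  have hωn1 : ∀ n : Fin N, W1 n ≤ ω := fun n => le_trans (le_max_left _ _) (hsup n)
  have hωn2 : ∀ n : Fin N, W2 n ≤ ω := fun n => le_trans (le_max_right _ _) (hsup n)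
  have hsub : uIcc (0:ℝ) t ⊆ Icc 0 T := by
    rw [uIcc_of_le ht.1]; exact Icc_subset_Icc_right ht.2
  have hr1c : Continuous (fun s => r₁ s (ω * s)) :=
    hr₁.comp (continuous_id.prodMk (continuous_const.mul continuous_id))
  -- per-n bound
  have keyn : ∀ n : Fin N,
      |(∫ s in (0:ℝ)..t, Real.sin (((n.val:ℝ) + 1) * (t - s)) / ((n.val:ℝ) + 1) *
          (r₀ s + r₁ s (ω * s)))
        - ∫ s in (0:ℝ)..t, Real.sin (((n.val:ℝ) + 1) * (t - s)) / ((n.val:ℝ) + 1) * r₀ s|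
      ≤ 2 * e := by
    intro n
    have hφc : Continuous (fun s => Real.sin (((n.val:ℝ) + 1) * (t - s)) / ((n.val:ℝ) + 1)) :=
      (Real.continuous_sin.comp (continuous_const.mul (continuous_const.sub continuous_id))).div_const _
    have intφr0 : IntervalIntegrable
        (fun s => Real.sin (((n.val:ℝ) + 1) * (t - s)) / ((n.val:ℝ) + 1) * r₀ s)
        MeasureTheory.volume 0 t :=
      ContinuousOn.intervalIntegrable (hφc.continuousOn.mul (hr₀.mono hsub))
    have intφr1 : IntervalIntegrable
        (fun s => Real.sin (((n.val:ℝ) + 1) * (t - s)) / ((n.val:ℝ) + 1) * r₁ s (ω * s))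
        MeasureTheory.volume 0 t :=
      (hφc.mul hr1c).intervalIntegrable _ _
    have hstep1 : (∫ s in (0:ℝ)..t, Real.sin (((n.val:ℝ) + 1) * (t - s)) / ((n.val:ℝ) + 1) *
          (r₀ s + r₁ s (ω * s)))
        = (∫ s in (0:ℝ)..t, Real.sin (((n.val:ℝ) + 1) * (t - s)) / ((n.val:ℝ) + 1) * r₀ s)
          + ∫ s in (0:ℝ)..t, Real.sin (((n.val:ℝ) + 1) * (t - s)) / ((n.val:ℝ) + 1)
              * r₁ s (ω * s) := by
      rw [← intervalIntegral.integral_add intφr0 intφr1]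
      congr 1; funext s; ring
    have hstep2 : (∫ s in (0:ℝ)..t, Real.sin (((n.val:ℝ) + 1) * (t - s)) / ((n.val:ℝ) + 1)
          * r₁ s (ω * s))
        = Real.sin (((n.val:ℝ) + 1) * t) *
            (∫ s in (0:ℝ)..t, Real.cos (((n.val:ℝ) + 1) * s) / ((n.val:ℝ) + 1) * r₁ s (ω * s))
          - Real.cos (((n.val:ℝ) + 1) * t) *
            ∫ s in (0:ℝ)..t, Real.sin (((n.val:ℝ) + 1) * s) / ((n.val:ℝ) + 1) * r₁ s (ω * s) := by
      have hint1 : IntervalIntegrable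
          (fun s => Real.sin (((n.val:ℝ) + 1) * t) *
            (Real.cos (((n.val:ℝ) + 1) * s) / ((n.val:ℝ) + 1) * r₁ s (ω * s)))
          MeasureTheory.volume 0 t :=
        (continuous_const.mul ((hqc n).mul hr1c)).intervalIntegrable _ _
      have hint2 : IntervalIntegrable
          (fun s => Real.cos (((n.val:ℝ) + 1) * t) *
            (Real.sin (((n.val:ℝ) + 1) * s) / ((n.val:ℝ) + 1) * r₁ s (ω * s)))
          MeasureTheory.volume 0 t :=
        (continuous_const.mul ((hqs n).mul hr1c)).intervalIntegrable _ _
      rw [← intervalIntegral.integral_const_mul, ← intervalIntegral.integral_const_mul,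
        ← intervalIntegral.integral_sub hint1 hint2]
      congr 1; funext s
      rw [mul_sub ((n.val:ℝ) + 1) t s, Real.sin_sub]
      ring
    rw [hstep1, hstep2]
    have b1 := hW1b n ω (hωn1 n) t ht
    have b2 := hW2b n ω (hωn2 n) t ht
    have goal1 : |Real.sin (((n.val:ℝ) + 1) * t) *
        ∫ s in (0:ℝ)..t, Real.cos (((n.val:ℝ) + 1) * s) / ((n.val:ℝ) + 1) * r₁ s (ω * s)| ≤ e := by
      rw [abs_mul]
      calc _ ≤ 1 * e := mul_le_mul (abs_le.mpr ⟨Real.neg_one_le_sin _, Real.sin_le_one _⟩)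
                b1 (abs_nonneg _) zero_le_one
        _ = e := one_mul e
    have goal2 : |Real.cos (((n.val:ℝ) + 1) * t) *
        ∫ s in (0:ℝ)..t, Real.sin (((n.val:ℝ) + 1) * s) / ((n.val:ℝ) + 1) * r₁ s (ω * s)| ≤ e := by
      rw [abs_mul]
      calc _ ≤ 1 * e := mul_le_mul (abs_le.mpr ⟨Real.neg_one_le_cos _, Real.cos_le_one _⟩)
                b2 (abs_nonneg _) zero_le_one
        _ = e := one_mul e
    have hring : ∀ B A₁ A₂ : ℝ, B + (A₁ - A₂) - B = A₁ - A₂ := fun B A₁ A₂ => by ring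
    rw [hring]
    calc _ ≤ _ := abs_sub _ _
      _ ≤ e + e := add_le_add goal1 goal2
      _ = 2 * e := by ring
  -- sum it up
  rw [← Finset.sum_sub_distrib]
  have hterm : ∀ n : Fin N, |f n * Real.sin (((n.val:ℝ) + 1) * x) *
          (∫ s in (0:ℝ)..t, Real.sin (((n.val:ℝ) + 1) * (t - s)) / ((n.val:ℝ) + 1) *
            (r₀ s + r₁ s (ω * s)))
        - f n * Real.sin (((n.val:ℝ) + 1) * x) *
          ∫ s in (0:ℝ)..t, Real.sin (((n.val:ℝ) + 1) * (t - s)) / ((n.val:ℝ) + 1) * r₀ s|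
      ≤ |f n| * (2 * e) := by
    intro n
    rw [← mul_sub, abs_mul, abs_mul]
    calc |f n| * |Real.sin (((n.val:ℝ) + 1) * x)| * _ ≤ |f n| * 1 * (2 * e) := by
          refine mul_le_mul ?_ (keyn n) (abs_nonneg _) (by positivity)
          exact mul_le_mul_of_nonneg_left
            (abs_le.mpr ⟨Real.neg_one_le_sin _, Real.sin_le_one _⟩) (abs_nonneg _)
      _ = |f n| * (2 * e) := by ring
  calc _ ≤ ∑ n : Fin N, |f n * Real.sin (((n.val:ℝ) + 1) * x) *
          (∫ s in (0:ℝ)..t, Real.sin (((n.val:ℝ) + 1) * (t - s)) / ((n.val:ℝ) + 1) *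
            (r₀ s + r₁ s (ω * s)))
        - f n * Real.sin (((n.val:ℝ) + 1) * x) *
          ∫ s in (0:ℝ)..t, Real.sin (((n.val:ℝ) + 1) * (t - s)) / ((n.val:ℝ) + 1) * r₀ s| :=
        Finset.abs_sum_le_sum_abs _ _
    _ ≤ ∑ n : Fin N, |f n| * (2 * e) := Finset.sum_le_sum fun n _ => hterm n
    _ = S * (2 * e) := by rw [← Finset.sum_mul]
    _ < ε := by
        rw [he]
        have hd : (0:ℝ) < S + 1 := by positivity
        rw [show S * (2 * (ε / (4 * (S + 1)))) = S * ε / (2 * (S + 1)) by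
          field_simp; ring]
        rw [div_lt_iff₀ (by positivity)]
        nlinarith [mul_pos hε hd]
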